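/- Closed choice C_N is Weihrauch equivalent to Bound : ⊆ O(N) ⇉ N, where n ∈ Bound(U) iff n ≥ m for all m ∈ U, with domain the bounded nonempty open subsets of N. -/

import Mathlib

/- Common background: type-two computability on Baire space, represented spaces
(representations as functional relations), Weihrauch reducibility, Cantor space,
Martin-Löf tests, Martin-Löf randomness, and the basic multivalued functions
`C_ℕ`, `d_MLR`, `LAY`, the layer map and layerwise computability. -/

namespace WL

abbrev Baire : Type := ℕ → ℕ
abbrev Cantor : Type := ℕ → Bool

/-- The initial segment of length `m` of a point of Baire space. -/
def initSeg (p : Baire) (m : ℕ) : List ℕ := (List.range m).map p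

/-- `l` is a prefix of the sequence `p`. -/
def PrefixOfFun (l : List ℕ) (p : Baire) : Prop := ∀ i : Fin l.length, l.get i = p i

/-- `F` is a computable (partial) function on Baire space, with domain (at least) `D`:
there is a computable monotone word function producing, on longer and longer prefixes of
an input `p ∈ D`, longer and longer prefixes of `F p`. -/
def ComputableOn (F : Baire → Baire) (D : Set Baire) : Prop :=
  ∃ φ : List ℕ → List ℕ, Computable φ ∧ (∀ l l' : List ℕ, l <+: l' → φ l <+: φ l') ∧
    ∀ p ∈ D, (∀ m, PrefixOfFun (φ (initSeg p m)) (F p)) ∧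
      ∀ n, ∃ m, n ≤ (φ (initSeg p m)).length

/-- Pairing on Baire space. -/
def pairB (p q : Baire) : Baire := fun n => if n % 2 = 0 then p (n / 2) else q (n / 2)

def evens (p : Baire) : Baire := fun n => p (2 * n)

def odds (p : Baire) : Baire := fun n => p (2 * n + 1)

/-- `F` is a realizer of the multivalued function `f`, w.r.t. representations
`δX`, `δY` (given as functional relations between names and points). -/
def Realizes {X Y : Type} (δX : Baire → X → Prop) (δY : Baire → Y → Prop)
    (f : X → Set Y) (F : Baire → Baire) : Prop :=
  ∀ p x, δX p x → (f x).Nonempty → ∃ y, δY (F p) y ∧ y ∈ f x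

/-- The names of points in the domain of the multivalued function `f`. -/
def domNames {X Y : Type} (δX : Baire → X → Prop) (f : X → Set Y) : Set Baire :=
  {p | ∃ x, δX p x ∧ (f x).Nonempty}

/-- Weihrauch reducibility `f ≤_W g`. -/
def WRed {X Y Z W : Type} (δX : Baire → X → Prop) (δY : Baire → Y → Prop)
    (δZ : Baire → Z → Prop) (δW : Baire → W → Prop)
    (f : X → Set Y) (g : Z → Set W) : Prop :=
  ∃ H K : Baire → Baire, ComputableOn H (domNames δX f) ∧
    ∀ G : Baire → Baire, Realizes δZ δW g G →
      ComputableOn K {r | ∃ p ∈ domNames δX f, r = pairB p (G (H p))} ∧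
      Realizes δX δY f fun p => K (pairB p (G (H p)))

/-- Weihrauch equivalence. -/
def WEquiv {X Y Z W : Type} (δX : Baire → X → Prop) (δY : Baire → Y → Prop)
    (δZ : Baire → Z → Prop) (δW : Baire → W → Prop)
    (f : X → Set Y) (g : Z → Set W) : Prop :=
  WRed δX δY δZ δW f g ∧ WRed δZ δW δX δY g f

/-- The multivalued function `f` is computable. -/
def ComputableMF {X Y : Type} (δX : Baire → X → Prop) (δY : Baire → Y → Prop)
    (f : X → Set Y) : Prop :=
  ∃ F : Baire → Baire, ComputableOn F (domNames δX f) ∧ Realizes δX δY f F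

/-- Representation of `ℕ`. -/
def repNat : Baire → ℕ → Prop := fun p n => p 0 = n

/-- Representation of Baire space. -/
def repBaire : Baire → Baire → Prop := fun p q => p = q

/-- Representation of Cantor space. -/
def repCantor : Baire → Cantor → Prop := fun p x => ∀ n, p n = if x n then 1 else 0

/-- Representation of closed subsets of `ℕ` by enumerations of their complements. -/
def repClosedNat : Baire → Set ℕ → Prop := fun p A => ∀ n, n ∈ A ↔ ¬ ∃ i, p i = n + 1

/-- Representation of open subsets of `ℕ` by enumerations. -/
def repOpenNat : Baire → Set ℕ → Prop := fun p A => ∀ n, n ∈ A ↔ ∃ i, p i = n + 1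

/-- Product representation. -/
def prodRep {X Z : Type} (δX : Baire → X → Prop) (δZ : Baire → Z → Prop) :
    Baire → X × Z → Prop := fun p xz => δX (evens p) xz.1 ∧ δZ (odds p) xz.2

/-- Representation of countable powers. -/
def seqRep {X : Type} (δX : Baire → X → Prop) : Baire → (ℕ → X) → Prop :=
  fun p xs => ∀ i, δX (fun n => p (Nat.pair i n)) (xs i)

/-- Product of multivalued functions. -/
def prodMF {X Y Z W : Type} (f : X → Set Y) (g : Z → Set W) : X × Z → Set (Y × W) :=
  fun xz => f xz.1 ×ˢ g xz.2

/-- Composition of multivalued functions (with the usual domain condition). -/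
def compMF {X Y Z : Type} (g : Y → Set Z) (f : X → Set Y) : X → Set Z :=
  fun x => {z | (∀ y ∈ f x, (g y).Nonempty) ∧ ∃ y ∈ f x, z ∈ g y}

/-- The cylinder of a finite binary word. -/
def cyl (w : List Bool) : Set Cantor := {x | ∀ i : Fin w.length, x i = w.get i}

/-- Decoding a natural number as a finite binary word. -/
def wordOf (k : ℕ) : List Bool := (Encodable.decode (α := List Bool) k).getD []

/-- The open subset of Cantor space enumerated by `p` (as a union of cylinders). -/
def openOf (p : Baire) : Set Cantor :=
  ⋃ i, if p i = 0 then (∅ : Set Cantor) else cyl (wordOf (p i - 1))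

/-- Representation of open subsets of Cantor space. -/
def repOpenCantor : Baire → Set Cantor → Prop := fun p U => U = openOf p

/-- Representation of closed subsets of Cantor space. -/
def repClosedCantor : Baire → Set Cantor → Prop := fun p A => A = (openOf p)ᶜ

/-- The number of binary words of length `n` whose cylinder is contained in `U`. -/
noncomputable def cylCount (U : Set Cantor) (n : ℕ) : ℕ :=
  Nat.card {w : Fin n → Bool // cyl (List.ofFn w) ⊆ U}

/-- For an open set `U`, `lebLe U i` expresses `λ(U) ≤ 2^{-i}` for the uniform measure. -/
def lebLe (U : Set Cantor) (i : ℕ) : Prop := ∀ n, 2 ^ i * cylCount U n ≤ 2 ^ n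

/-- A Martin-Löf test: a computable sequence of (codes of) open sets `U_i` with
`λ(U_i) ≤ 2^{-i}`. -/
structure MLTest where
  e : ℕ → ℕ → ℕ
  comp : Computable₂ e
  meas : ∀ i, lebLe (openOf (e i)) i

/-- The `i`-th level of a Martin-Löf test. -/
def MLTest.U (T : MLTest) (i : ℕ) : Set Cantor := openOf (T.e i)

/-- Martin-Löf randomness. -/
def MLRandom (x : Cantor) : Prop := ∀ T : MLTest, ∃ i, x ∉ T.U i

/-- A universal Martin-Löf test. -/
def MLTest.Universal (T : MLTest) : Prop := ∀ T' : MLTest, (⋂ i, T'.U i) ⊆ ⋂ i, T.U i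

/-- Closed choice on the naturals, as a multivalued function on `A(ℕ)`. -/
def CN : Set ℕ → Set ℕ := fun A => A

/-- `d_MLR : MLR → {1}`. -/
def dMLR : Cantor → Set ℕ := fun x => {n | MLRandom x ∧ n = 1}

/-- The degree `LAY = C_ℕ × d_MLR`. -/
def LAY : Set ℕ × Cantor → Set (ℕ × ℕ) := prodMF CN dMLR

abbrev repLAYin : Baire → Set ℕ × Cantor → Prop := prodRep repClosedNat repCantor
abbrev repPairNat : Baire → ℕ × ℕ → Prop := prodRep repNat repNat

/-- The layer map of a Martin-Löf test: `n ∈ Lay T x` iff `x ∉ U_n`. -/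
def Lay (T : MLTest) : Cantor → Set ℕ := fun x => {n | MLRandom x ∧ x ∉ T.U n}

/-- The randomness deficiency map: `RD T x = min {n | x ∉ U_n}`. -/
def RD (T : MLTest) : Cantor → Set ℕ := fun x => {n | MLRandom x ∧ IsLeast {m | x ∉ T.U m} n}

/-- `f : MLR ⇉ X` is layerwise computable w.r.t. the test `T`: some computable
`g(p, k)` produces a value in `f p` whenever `p ∉ U_k`. -/
def LayerwiseComputable (T : MLTest) {X : Type} (δX : Baire → X → Prop)
    (f : Cantor → Set X) : Prop :=
  ∃ G : Baire → Baire,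
    ComputableOn G {r | ∃ p x k, repCantor p x ∧ x ∉ T.U k ∧ (f x).Nonempty ∧
      r = pairB p fun _ => k} ∧
    ∀ p x k, repCantor p x → x ∉ T.U k → (f x).Nonempty →
      ∃ y, δX (G (pairB p fun _ => k)) y ∧ y ∈ f x

/-- Layerwise computability for multivalued functions with an additional input. -/
def LayerwiseComputable₂ (T : MLTest) {I X : Type} (δI : Baire → I → Prop)
    (δX : Baire → X → Prop) (f : Cantor × I → Set X) : Prop :=
  ∃ G : Baire → Baire,
    ComputableOn G {r | ∃ p q x i k, repCantor p x ∧ δI q i ∧ x ∉ T.U k ∧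
      (f (x, i)).Nonempty ∧ r = pairB (pairB p q) fun _ => k} ∧
    ∀ p q x i k, repCantor p x → δI q i → x ∉ T.U k → (f (x, i)).Nonempty →
      ∃ y, δX (G (pairB (pairB p q) fun _ => k)) y ∧ y ∈ f (x, i)

/-- `Σ_{i<|w|} (2 w(i) - 1)`: the signed count of a binary word. -/
def signedSum (w : List Bool) : ℤ := (w.count true : ℤ) - (w.count false : ℤ)

/-- The prefix of length `n` of a point of Cantor space. -/
def initBits (x : Cantor) (n : ℕ) : List Bool := List.ofFn fun i : Fin n => x i

/-- `Bound : ⊆ O(ℕ) ⇉ ℕ`: `n ∈ Bound U` iff `n` bounds the nonempty enumerated set `U`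
(so the domain consists of the bounded nonempty open subsets of `ℕ`). -/
def BoundN : Set ℕ → Set ℕ := fun U => {n | U.Nonempty ∧ ∀ m ∈ U, m ≤ n}

section CNBoundAux

/-! ### Auxiliary lemmas for `CN_equivW_Bound` -/

lemma not_all_succ_mem (l : List ℕ) : ¬ ∀ j ≤ l.length, j + 1 ∈ l := by
  intro h
  have hsub : ((List.range (l.length + 1)).map (· + 1)) ⊆ l := by
    intro x hx
    rcases List.mem_map.1 hx with ⟨j, hj, rfl⟩
    exact h j (Nat.lt_succ_iff.mp (List.mem_range.1 hj))
  have hnd : ((List.range (l.length + 1)).map (· + 1)).Nodup :=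
    (List.nodup_range).map fun a b h => Nat.succ_injective h
  have hle := (hnd.subperm hsub).length_le
  simp at hle

/-- Fuelled search for the least `j` with `j + 1 ∉ l`. -/
def mexIter (l : List ℕ) (f : ℕ) : ℕ :=
  Nat.rec 0 (fun _ ih => if ih + 1 ∈ l then ih + 1 else ih) f

lemma mexIter_zero (l : List ℕ) : mexIter l 0 = 0 := rfl

lemma mexIter_succ (l : List ℕ) (f : ℕ) :
    mexIter l (f + 1) = if mexIter l f + 1 ∈ l then mexIter l f + 1 else mexIter l f := rfl

/-- `mexA l` is the least `j` such that `j + 1 ∉ l`. -/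
def mexA (l : List ℕ) : ℕ := mexIter l l.length

lemma mexIter_spec (l : List ℕ) (f : ℕ) :
    (∀ j < mexIter l f, j + 1 ∈ l) ∧ (mexIter l f + 1 ∈ l → mexIter l f = f) := by
  induction f with
  | zero => exact ⟨fun j h => absurd h (Nat.not_lt_zero j), fun _ => rfl⟩
  | succ f ih =>
    rcases ih with ⟨h1, h2⟩
    by_cases hm : mexIter l f + 1 ∈ l
    · have hk : mexIter l (f + 1) = mexIter l f + 1 := by rw [mexIter_succ, if_pos hm]
      refine ⟨?_, ?_⟩
      · intro j hj
        rw [hk] at hj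
        rcases Nat.lt_succ_iff_lt_or_eq.mp hj with h | h
        · exact h1 j h
        · subst h; exact hm
      · intro _; rw [hk, h2 hm]
    · have hk : mexIter l (f + 1) = mexIter l f := by rw [mexIter_succ, if_neg hm]
      exact ⟨by rw [hk]; exact h1, by rw [hk]; intro h; exact absurd h hm⟩

lemma mexA_lt_mem (l : List ℕ) : ∀ j < mexA l, j + 1 ∈ l := (mexIter_spec l l.length).1

lemma mexA_succ_not_mem (l : List ℕ) : mexA l + 1 ∉ l := by
  intro h
  have h2 : mexA l = l.length := (mexIter_spec l l.length).2 h
  apply not_all_succ_mem l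
  intro j hj
  rcases lt_or_eq_of_le hj with h' | h'
  · exact mexA_lt_mem l j (h2 ▸ h')
  · subst h'; exact h2 ▸ h

lemma mexA_le {l : List ℕ} {j : ℕ} (h : j + 1 ∉ l) : mexA l ≤ j :=
  not_lt.mp fun hlt => h (mexA_lt_mem l j hlt)

lemma mexA_primrec : Primrec mexA := by
  have hmem : PrimrecPred fun q : List ℕ × (ℕ × ℕ) => q.2.2 + 1 ∈ q.1 := by
    have h1 : PrimrecPred fun q : List ℕ × (ℕ × ℕ) =>
        List.idxOf (q.2.2 + 1) q.1 < q.1.length :=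
      Primrec.nat_lt.comp
        (Primrec.list_idxOf.comp (Primrec.succ.comp (Primrec.snd.comp Primrec.snd)) Primrec.fst)
        (Primrec.list_length.comp Primrec.fst)
    exact h1.of_eq fun q => by
      simp [List.idxOf_lt_length_iff]
  have : Primrec fun l : List ℕ =>
      Nat.rec (motive := fun _ => ℕ) 0
        (fun _ ih => if ih + 1 ∈ l then ih + 1 else ih) l.length :=
    Primrec.nat_rec' Primrec.list_length (Primrec.const 0)
      ((Primrec.ite hmem
        (Primrec.succ.comp (Primrec.snd.comp Primrec.snd))
        (Primrec.snd.comp Primrec.snd)).to₂)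
  exact this.of_eq fun l => rfl

/-! ### initSeg lemmas -/

lemma initSeg_length (p : Baire) (m : ℕ) : (initSeg p m).length = m := by simp [initSeg]

lemma mem_initSeg {p : Baire} {m n : ℕ} : n ∈ initSeg p m ↔ ∃ i < m, p i = n := by
  simp [initSeg]

lemma initSeg_getI {p : Baire} {m i : ℕ} (h : i < m) : (initSeg p m).getI i = p i := by
  have hl : i < (initSeg p m).length := by rw [initSeg_length]; exact h
  rw [List.getI_eq_getElem _ hl]
  simp [initSeg]

lemma initSeg_prefix {p : Baire} {m m' : ℕ} (h : m ≤ m') : initSeg p m <+: initSeg p m' := by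
  have : (initSeg p m').take m = initSeg p m := by
    simp [initSeg, ← List.map_take, List.take_range, Nat.min_eq_left h]
  rw [← this]
  exact List.take_prefix _ _

lemma prefix_getI {l l' : List ℕ} {i : ℕ} (h : l <+: l') (hi : i < l.length) :
    l.getI i = l'.getI i := by
  have hi' : i < l'.length := lt_of_lt_of_le hi h.length_le
  rw [List.getI_eq_getElem _ hi, List.getI_eq_getElem _ hi']
  exact List.IsPrefix.getElem h hi

lemma prefixOfFun_initSeg (q : Baire) (m : ℕ) : PrefixOfFun (initSeg q m) q := by
  rintro ⟨i, hi⟩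
  simp [initSeg, List.get_eq_getElem]

/-! ### Generic ComputableOn constructions -/

lemma computableOn_of_map (F : Baire → Baire) (h : List ℕ → ℕ → ℕ) (hc : Primrec₂ h)
    (hmono : ∀ l l' s, l <+: l' → s < l.length → h l s = h l' s)
    (hval : ∀ p m s, s < m → h (initSeg p m) s = F p s) (D : Set Baire) :
    ComputableOn F D := by
  refine ⟨fun l => (List.range l.length).map (h l), ?_, ?_, ?_⟩
  · exact (Primrec.list_map (Primrec.list_range.comp Primrec.list_length) hc).to_comp
  · intro l l' hll
    have hlen := hll.length_le
    have heq : (List.range l.length).map (h l) =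
        ((List.range l'.length).map (h l')).take l.length := by
      rw [← List.map_take, List.take_range, Nat.min_eq_left hlen]
      exact List.map_congr_left fun s hs => hmono l l' s hll (List.mem_range.1 hs)
    show (List.range l.length).map (h l) <+: (List.range l'.length).map (h l')
    rw [heq]
    exact List.take_prefix _ _
  · intro p _hp
    constructor
    · intro m
      have heq : (List.range (initSeg p m).length).map (h (initSeg p m)) = initSeg (F p) m := by
        rw [initSeg_length]
        exact List.map_congr_left fun s hs => hval p m s (List.mem_range.1 hs)
      show PrefixOfFun ((List.range (initSeg p m).length).map (h (initSeg p m))) (F p)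
      rw [heq]
      exact prefixOfFun_initSeg _ _
    · intro n
      exact ⟨n, by simp [initSeg_length]⟩

lemma computableOn_of_const (f : Baire → ℕ) (c : List ℕ → Bool) (v : List ℕ → ℕ)
    (hcc : Primrec c) (hvc : Primrec v)
    (hmc : ∀ l l', l <+: l' → c l = true → c l' = true)
    (hmv : ∀ l l', l <+: l' → c l = true → v l' = v l)
    (hval : ∀ p m, c (initSeg p m) = true → v (initSeg p m) = f p)
    (hev : ∀ p, ∃ m, c (initSeg p m) = true) (D : Set Baire) :
    ComputableOn (fun p _ => f p) D := by
  refine ⟨fun l => if c l then List.replicate l.length (v l) else [], ?_, ?_, ?_⟩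
  · have hrep : Primrec fun l : List ℕ => List.replicate l.length (v l) := by
      have h1 : Primrec fun l : List ℕ => (List.range l.length).map (fun _ => v l) :=
        Primrec.list_map (Primrec.list_range.comp Primrec.list_length)
          ((hvc.comp Primrec.fst).to₂)
      exact h1.of_eq fun l => by
        simp [List.map_const']
    have hpp : PrimrecPred fun l : List ℕ => c l = true :=
      Primrec.primrecPred (hcc.of_eq fun l => by cases hc : c l <;> simp [hc])
    exact (Primrec.ite hpp hrep (Primrec.const [])).to_comp
  · intro l l' hll
    by_cases hc : c l = true
    · have hc' := hmc l l' hll hc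
      simp only [hc, hc', if_true]
      rw [hmv l l' hll hc]
      have : (List.replicate l'.length (v l)).take l.length = List.replicate l.length (v l) := by
        rw [List.take_replicate, Nat.min_eq_left hll.length_le]
      rw [← this]
      exact List.take_prefix _ _
    · simp only [Bool.not_eq_true] at hc
      simp only [hc]
      simp
  · intro p _hp
    constructor
    · intro m
      by_cases hc : c (initSeg p m) = true
      · simp only [hc, if_true]
        intro i
        simp [hval p m hc]
      · simp only [Bool.not_eq_true] at hc
        simp only [hc]
        intro i
        exact absurd i.isLt (by simp)
    · intro n
      obtain ⟨m0, hm0⟩ := hev p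
      refine ⟨max n m0, ?_⟩
      have hc := hmc _ _ (initSeg_prefix (le_max_right n m0)) hm0
      simp [hc, initSeg_length, le_max_left]

/-! ### pairB lemmas -/

lemma evens_pairB (p q : Baire) : evens (pairB p q) = p := by
  funext n
  simp [evens, pairB, Nat.mul_mod_right, Nat.mul_div_cancel_left]

lemma pairB_one (p q : Baire) : pairB p q 1 = q 0 := by
  simp [pairB]

end CNBoundAux

section CNBoundMain

/-- Stage-`s` approximation to the minimum of the closed set named by `p`. -/
def aSeq (p : Baire) (s : ℕ) : ℕ := mexA (initSeg p s)

/-- Word-level version of `aSeq`. -/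
def aA (l : List ℕ) (s : ℕ) : ℕ := mexA ((List.range s).map l.getI)

lemma aA_initSeg {p : Baire} {m s : ℕ} (h : s ≤ m) : aA (initSeg p m) s = aSeq p s := by
  unfold aA aSeq
  congr 1
  have hseg : initSeg p s = (List.range s).map p := rfl
  rw [hseg]
  exact List.map_congr_left fun i hi => initSeg_getI (lt_of_lt_of_le (List.mem_range.1 hi) h)

lemma aA_prefix {l l' : List ℕ} {s : ℕ} (h : l <+: l') (hs : s ≤ l.length) :
    aA l s = aA l' s := by
  unfold aA
  congr 1
  exact List.map_congr_left fun i hi => prefix_getI h (lt_of_lt_of_le (List.mem_range.1 hi) hs)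

lemma aA_primrec : Primrec₂ aA := by
  have h : Primrec fun q : List ℕ × ℕ => mexA ((List.range q.2).map q.1.getI) :=
    mexA_primrec.comp (Primrec.list_map (Primrec.list_range.comp Primrec.snd)
      ((Primrec.list_getI.comp (Primrec.fst.comp Primrec.fst) Primrec.snd).to₂))
  exact h

/-- The forward functional for `CN ≤W Bound`: enumerates `0` and all stages where the
approximation to the minimum changes. -/
def H1 (p : Baire) : Baire := fun s =>
  Nat.casesOn s 1 fun t => if aSeq p (t + 1) = aSeq p t then 0 else t + 2

def h1 (l : List ℕ) (s : ℕ) : ℕ :=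
  Nat.casesOn s 1 fun t => if aA l (t + 1) = aA l t then 0 else t + 2

lemma h1_primrec : Primrec₂ h1 := by
  have h : Primrec fun q : List ℕ × ℕ =>
      (Nat.casesOn q.2 1 fun t => if aA q.1 (t + 1) = aA q.1 t then 0 else t + 2 : ℕ) :=
    Primrec.nat_casesOn Primrec.snd (Primrec.const 1)
      ((Primrec.ite
        (Primrec.eq.comp
          (aA_primrec.comp (Primrec.fst.comp Primrec.fst) (Primrec.succ.comp Primrec.snd))
          (aA_primrec.comp (Primrec.fst.comp Primrec.fst) Primrec.snd))
        (Primrec.const 0)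
        (Primrec.succ.comp (Primrec.succ.comp Primrec.snd))).to₂)
  exact h

lemma H1_computableOn (D : Set Baire) : ComputableOn H1 D := by
  apply computableOn_of_map H1 h1 h1_primrec
  · intro l l' s hll hs
    cases s with
    | zero => rfl
    | succ t =>
      show (if aA l (t + 1) = aA l t then 0 else t + 2)
          = (if aA l' (t + 1) = aA l' t then 0 else t + 2)
      rw [aA_prefix hll (le_of_lt hs), aA_prefix hll (by omega)]
  · intro p m s hs
    cases s with
    | zero => rfl
    | succ t =>
      show (if aA (initSeg p m) (t + 1) = aA (initSeg p m) t then 0 else t + 2)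
          = (if aSeq p (t + 1) = aSeq p t then 0 else t + 2)
      rw [aA_initSeg (show t + 1 ≤ m by omega), aA_initSeg (show t ≤ m by omega)]

lemma K1_computableOn (D : Set Baire) :
    ComputableOn (fun r _ => aSeq (evens r) (r 1)) D := by
  apply computableOn_of_const _ (fun l => decide (2 * l.getI 1 + 2 ≤ l.length))
    (fun l => mexA ((List.range (l.getI 1)).map fun i => l.getI (2 * i)))
  · exact PrimrecPred.decide <| Primrec.nat_le.comp
      (Primrec.nat_add.comp
        (Primrec.nat_mul.comp (Primrec.const 2)
          (Primrec.list_getI.comp Primrec.id (Primrec.const 1)))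
        (Primrec.const 2))
      Primrec.list_length
  · exact mexA_primrec.comp (Primrec.list_map
      (Primrec.list_range.comp (Primrec.list_getI.comp Primrec.id (Primrec.const 1)))
      ((Primrec.list_getI.comp Primrec.fst
        (Primrec.nat_mul.comp (Primrec.const 2) Primrec.snd)).to₂))
  · intro l l' hll hc
    simp only [decide_eq_true_eq] at hc ⊢
    have h1lt : (1 : ℕ) < l.length := by omega
    have e1 : l'.getI 1 = l.getI 1 := (prefix_getI hll h1lt).symm
    have := hll.length_le
    rw [e1]; omega
  · intro l l' hll hc
    simp only [decide_eq_true_eq] at hc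
    have h1lt : (1 : ℕ) < l.length := by omega
    have e1 : l'.getI 1 = l.getI 1 := (prefix_getI hll h1lt).symm
    rw [e1]
    congr 1
    refine List.map_congr_left fun i hi => ?_
    have hi' : i < l.getI 1 := List.mem_range.1 hi
    exact (prefix_getI hll (by omega)).symm
  · intro p m hc
    simp only [decide_eq_true_eq, initSeg_length] at hc
    have h1m : (1 : ℕ) < m := by omega
    have e1 : (initSeg p m).getI 1 = p 1 := initSeg_getI h1m
    rw [e1] at hc ⊢
    unfold aSeq
    congr 1
    have hseg : initSeg (evens p) (p 1) = (List.range (p 1)).map (evens p) := rfl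
    rw [hseg]
    refine List.map_congr_left fun i hi => ?_
    have hi' : i < p 1 := List.mem_range.1 hi
    rw [initSeg_getI (show 2 * i < m by omega)]
    rfl
  · intro p
    refine ⟨2 * p 1 + 2, ?_⟩
    simp only [decide_eq_true_eq, initSeg_length]
    rw [initSeg_getI (show (1 : ℕ) < 2 * p 1 + 2 by omega)]

/-- The forward functional for `Bound ≤W CN`: enumerates the complement of the set of
upper bounds of the open set named by `p`. -/
def H2 (p : Baire) : Baire := fun j =>
  if (Nat.unpair j).2 + 2 ≤ p (Nat.unpair j).1 then (Nat.unpair j).2 + 1 else 0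

def h2 (l : List ℕ) (j : ℕ) : ℕ :=
  if (Nat.unpair j).2 + 2 ≤ l.getI (Nat.unpair j).1 then (Nat.unpair j).2 + 1 else 0

lemma h2_primrec : Primrec₂ h2 := by
  have h : Primrec fun q : List ℕ × ℕ =>
      if (Nat.unpair q.2).2 + 2 ≤ q.1.getI (Nat.unpair q.2).1 then (Nat.unpair q.2).2 + 1
      else 0 :=
    Primrec.ite
      (Primrec.nat_le.comp
        (Primrec.nat_add.comp (Primrec.snd.comp (Primrec.unpair.comp Primrec.snd))
          (Primrec.const 2))
        (Primrec.list_getI.comp Primrec.fst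
          (Primrec.fst.comp (Primrec.unpair.comp Primrec.snd))))
      (Primrec.succ.comp (Primrec.snd.comp (Primrec.unpair.comp Primrec.snd)))
      (Primrec.const 0)
  exact h

lemma H2_computableOn (D : Set Baire) : ComputableOn H2 D := by
  apply computableOn_of_map H2 h2 h2_primrec
  · intro l l' s hll hs
    unfold h2
    rw [prefix_getI hll (lt_of_le_of_lt (Nat.unpair_left_le s) hs)]
  · intro p m s hs
    unfold h2 H2
    rw [initSeg_getI (lt_of_le_of_lt (Nat.unpair_left_le s) hs)]

lemma K2_computableOn (D : Set Baire) : ComputableOn (fun r _ => r 1) D := by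
  apply computableOn_of_const _ (fun l => decide (2 ≤ l.length)) (fun l => l.getI 1)
  · exact PrimrecPred.decide <| Primrec.nat_le.comp (Primrec.const 2) Primrec.list_length
  · exact Primrec.list_getI.comp Primrec.id (Primrec.const 1)
  · intro l l' hll hc
    simp only [decide_eq_true_eq] at hc ⊢
    have := hll.length_le
    omega
  · intro l l' hll hc
    simp only [decide_eq_true_eq] at hc
    exact (prefix_getI hll (by omega)).symm
  · intro p m hc
    simp only [decide_eq_true_eq, initSeg_length] at hc
    exact initSeg_getI (by omega)
  · intro p
    exact ⟨2, by simp [initSeg_length]⟩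

end CNBoundMain

/-- Closed choice on ℕ is Weihrauch equivalent to `Bound`. -/
theorem CN_equivW_Bound : WEquiv repClosedNat repNat repOpenNat repNat CN BoundN := by
  constructor
  · -- CN ≤W Bound
    refine ⟨H1, fun r _ => aSeq (evens r) (r 1), H1_computableOn _, ?_⟩
    intro G hG
    refine ⟨K1_computableOn _, ?_⟩
    intro p A hpA hA
    set a := sInf A with ha
    have hmem : a ∈ A := Nat.sInf_mem hA
    have hnotp : ¬∃ i, p i = a + 1 := (hpA a).mp hmem
    have L1 : ∀ s, aSeq p s ≤ a := by
      intro s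
      apply mexA_le
      intro hmem'
      rcases mem_initSeg.1 hmem' with ⟨i, _, hi⟩
      exact hnotp ⟨i, hi⟩
    classical
    set I : ℕ → ℕ := fun j => if h : ∃ i, p i = j + 1 then Nat.find h else 0 with hIdef
    have hI : ∀ j < a, p (I j) = j + 1 := by
      intro j hj
      have hjA : j ∉ A := Nat.notMem_of_lt_sInf hj
      have hex : ∃ i, p i = j + 1 := by
        by_contra hnex
        exact hjA ((hpA j).mpr hnex)
      simp only [hIdef, dif_pos hex]
      exact Nat.find_spec hex
    set s0 := ((Finset.range a).sup I) + 1 with hs0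
    have L2 : ∀ s, s0 ≤ s → aSeq p s = a := by
      intro s hs
      refine le_antisymm (L1 s) ?_
      by_contra hlt
      push_neg at hlt
      apply mexA_succ_not_mem (initSeg p s)
      apply mem_initSeg.2
      refine ⟨I (aSeq p s), ?_, hI _ hlt⟩
      have h1 : I (aSeq p s) ≤ (Finset.range a).sup I :=
        Finset.le_sup (Finset.mem_range.2 hlt)
      omega
    set U : Set ℕ := {m | ∃ i, H1 p i = m + 1} with hUdef
    have hrep : repOpenNat (H1 p) U := fun n => Iff.rfl
    have hU0 : (0 : ℕ) ∈ U := ⟨0, rfl⟩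
    have hUb : ∀ m ∈ U, m ≤ s0 := by
      rintro m ⟨i, hi⟩
      cases i with
      | zero =>
        have : (1 : ℕ) = m + 1 := hi
        omega
      | succ t =>
        by_cases hch : aSeq p (t + 1) = aSeq p t
        · have h0 : (0 : ℕ) = m + 1 := by
            rw [← hi]
            show (0 : ℕ) = if aSeq p (t + 1) = aSeq p t then 0 else t + 2
            rw [if_pos hch]
          omega
        · have h0 : t + 2 = m + 1 := by
            rw [← hi]
            show t + 2 = if aSeq p (t + 1) = aSeq p t then 0 else t + 2
            rw [if_neg hch]
          have ht : t < s0 := by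
            by_contra hts
            push_neg at hts
            exact hch (by rw [L2 _ (by omega), L2 _ hts])
          omega
    have hBne : (BoundN U).Nonempty := ⟨s0, ⟨0, hU0⟩, hUb⟩
    obtain ⟨n, hn1, hn2⟩ := hG (H1 p) U hrep hBne
    have hn1' : (G (H1 p)) 0 = n := hn1
    have hn2' : ∀ m ∈ U, m ≤ n := hn2.2
    have hstab : ∀ k, aSeq p (n + k) = aSeq p n := by
      intro k
      induction k with
      | zero => rfl
      | succ k ih =>
        by_contra hne
        have hne' : aSeq p (n + k + 1) ≠ aSeq p (n + k) := by
          intro he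
          exact hne (he.trans ih)
        have hiU : (n + k + 1) ∈ U := by
          refine ⟨n + k + 1, ?_⟩
          show (if aSeq p (n + k + 1) = aSeq p (n + k) then 0 else (n + k) + 2) = (n + k + 1) + 1
          rw [if_neg hne']
        have := hn2' _ hiU
        omega
    have hfin : aSeq p n = a := by
      have hs := hstab s0
      rw [← hs]
      exact L2 _ (by omega)
    refine ⟨a, ?_, hmem⟩
    show aSeq (evens (pairB p (G (H1 p)))) ((pairB p (G (H1 p))) 1) = a
    rw [evens_pairB, pairB_one, hn1', hfin]
  · -- Bound ≤W CN
    refine ⟨H2, fun r _ => r 1, H2_computableOn _, ?_⟩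
    intro G hG
    refine ⟨K2_computableOn _, ?_⟩
    intro p U hpU hne
    obtain ⟨b, hb1, hb2⟩ := hne
    set A : Set ℕ := {n | ∀ m ∈ U, m ≤ n} with hAdef
    have hiff : ∀ n, (∃ i, H2 p i = n + 1) ↔ ∃ m ∈ U, n < m := by
      intro n
      constructor
      · rintro ⟨i, hi⟩
        by_cases hc : (Nat.unpair i).2 + 2 ≤ p (Nat.unpair i).1
        · have hi' : (Nat.unpair i).2 + 1 = n + 1 := by
            rw [← hi]
            show (Nat.unpair i).2 + 1 = H2 p i
            unfold H2
            rw [if_pos hc]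
          have h2n : (Nat.unpair i).2 = n := by omega
          refine ⟨p (Nat.unpair i).1 - 1, ?_, by omega⟩
          refine (hpU _).2 ⟨(Nat.unpair i).1, ?_⟩
          omega
        · have hi' : (0 : ℕ) = n + 1 := by
            rw [← hi]
            show (0 : ℕ) = H2 p i
            unfold H2
            rw [if_neg hc]
          omega
      · rintro ⟨m, hm, hnm⟩
        obtain ⟨j, hj⟩ := (hpU m).1 hm
        refine ⟨Nat.pair j n, ?_⟩
        show (if (Nat.unpair (Nat.pair j n)).2 + 2 ≤ p (Nat.unpair (Nat.pair j n)).1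
            then (Nat.unpair (Nat.pair j n)).2 + 1 else 0) = n + 1
        rw [Nat.unpair_pair]
        show (if n + 2 ≤ p j then n + 1 else 0) = n + 1
        rw [if_pos (by omega)]
    have hArep : repClosedNat (H2 p) A := by
      intro n
      rw [not_congr (hiff n)]
      constructor
      · rintro h ⟨m, hm, hnm⟩
        have := h m hm
        omega
      · intro h m hm
        by_contra hc
        exact h ⟨m, hm, by omega⟩
    have hAne : (CN A).Nonempty := ⟨b, hb2⟩
    obtain ⟨y, hy1, hy2⟩ := hG (H2 p) A hArep hAne
    have hy1' : (G (H2 p)) 0 = y := hy1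
    refine ⟨y, ?_, hb1, hy2⟩
    show (pairB p (G (H2 p))) 1 = y
    rw [pairB_one, hy1']


end WL
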